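/- Let X be a Polish space, μ and ν probability measures on X, and Ψ : X × X → [0,∞) a continuous function with Ψ(x,y) > 0 whenever x ≠ y. Suppose there exists a sequence of X × X-valued random variables (X_n, Y_n)_{n≥1} such that X_n has law μ and Y_n has law ν for each n, and E[Ψ(X_n, Y_n)] → 0 as n → ∞. Then μ = ν. -/

import Mathlib

open MeasureTheory Filter
open scoped ENNReal NNReal

/-- Tightness of a finite measure on a complete separable metric space. -/
lemma tight_aux {X : Type} [MetricSpace X] [CompleteSpace X]
    [SecondCountableTopology X] [MeasurableSpace X] [BorelSpace X]
    (μ : Measure X) [IsFiniteMeasure μ] {ε : ℝ≥0∞} (hε : ε ≠ 0) :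
    ∃ K : Set X, IsCompact K ∧ μ Kᶜ < ε := by
  rcases isEmpty_or_nonempty X with hX | hX
  · refine ⟨∅, isCompact_empty, ?_⟩
    have : (∅ : Set X)ᶜ = (∅ : Set X) := Set.eq_empty_of_isEmpty _
    rw [this, measure_empty]
    exact pos_iff_ne_zero.2 hε
  · obtain ⟨δ, hδpos, hδsum⟩ := ENNReal.exists_pos_sum_of_countable' hε ℕ
    set D := TopologicalSpace.denseSeq X with hD
    have hDdense : DenseRange D := TopologicalSpace.denseRange_denseSeq X
    -- W k n : union of n closed balls of radius 1/(k+1)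
    set W : ℕ → ℕ → Set X :=
      fun k n => ⋃ i ∈ Finset.range n, Metric.closedBall (D i) (1 / (k + 1 : ℝ)) with hW
    have hWclosed : ∀ k n, IsClosed (W k n) := by
      intro k n
      exact isClosed_biUnion_finset fun i _ => Metric.isClosed_closedBall
    have hWmono : ∀ k, Monotone (W k) := by
      intro k m n hmn
      apply Set.biUnion_subset_biUnion_left
      intro i hi
      exact Finset.mem_range.2 (lt_of_lt_of_le (Finset.mem_range.1 hi) hmn)
    have hWcov : ∀ k, (⋃ n, W k n) = Set.univ := by
      intro k
      apply Set.eq_univ_of_forall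
      intro x
      have hr : 0 < 1 / (k + 1 : ℝ) := by positivity
      obtain ⟨i, hi⟩ := hDdense.exists_dist_lt x hr
      refine Set.mem_iUnion.2 ⟨i + 1, ?_⟩
      refine Set.mem_biUnion (Finset.mem_range.2 (Nat.lt_succ_self i)) ?_
      rw [Metric.mem_closedBall]
      exact hi.le
    -- choose n k with μ (W k (n k))ᶜ < δ k
    have hchoice : ∀ k : ℕ, ∃ n, μ (W k n)ᶜ < δ k := by
      intro k
      have hanti : Antitone fun n => (W k n)ᶜ := fun m n hmn =>
        Set.compl_subset_compl.2 (hWmono k hmn)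
      have hiInter : (⋂ n, (W k n)ᶜ) = ∅ := by
        rw [← Set.compl_iUnion, hWcov k, Set.compl_univ]
      have htend : Tendsto (μ ∘ fun n => (W k n)ᶜ) atTop (nhds (μ (⋂ n, (W k n)ᶜ))) :=
        tendsto_measure_iInter_atTop
          (fun n => ((hWclosed k n).measurableSet.compl).nullMeasurableSet)
          hanti ⟨0, measure_ne_top μ _⟩
      rw [hiInter, measure_empty] at htend
      have := htend.eventually_lt_const (hδpos k)
      exact this.exists
    choose n hn using hchoice
    refine ⟨⋂ k, W k (n k), ?_, ?_⟩
    · apply TotallyBounded.isCompact_of_isClosed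
      · rw [Metric.totallyBounded_iff]
        intro r hr
        obtain ⟨k, hk⟩ := exists_nat_one_div_lt hr
        refine ⟨D '' {i | i < n k}, (Set.finite_Iio (n k)).image D, ?_⟩
        intro x hx
        have hx' : x ∈ W k (n k) := Set.mem_iInter.1 hx k
        obtain ⟨i, hi, hxi⟩ := Set.mem_iUnion₂.1 hx'
        refine Set.mem_biUnion ⟨i, Finset.mem_range.1 hi, rfl⟩ ?_
        rw [Metric.mem_ball]
        exact lt_of_le_of_lt (Metric.mem_closedBall.1 hxi) hk
      · exact isClosed_iInter fun k => hWclosed k (n k)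
    · have h1 : (⋂ k, W k (n k))ᶜ = ⋃ k, (W k (n k))ᶜ := by
        rw [Set.compl_iInter]
      rw [h1]
      calc μ (⋃ k, (W k (n k))ᶜ) ≤ ∑' k, μ (W k (n k))ᶜ := measure_iUnion_le _
        _ ≤ ∑' k, δ k := ENNReal.tsum_le_tsum fun k => (hn k).le
        _ < ε := hδsum

/-- coupling lemma. If `X` is Polish, `Ψ : X × X → [0,∞)` is continuous and
positive off the diagonal, and there are random variables `(X_n, Y_n)` with fixed marginals
`μ, ν` such that `E[Ψ(X_n, Y_n)] → 0`, then `μ = ν`. -/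
theorem stmt11 {X : Type} [TopologicalSpace X] [PolishSpace X]
    [MeasurableSpace X] [BorelSpace X]
    (μ ν : Measure X) [IsProbabilityMeasure μ] [IsProbabilityMeasure ν]
    (Ψ : X × X → ℝ) (hΨc : Continuous Ψ) (hΨnn : ∀ p, 0 ≤ Ψ p)
    (hΨpos : ∀ x y : X, x ≠ y → 0 < Ψ (x, y))
    {Ω : Type} [MeasurableSpace Ω] (P : Measure Ω) [IsProbabilityMeasure P]
    (Xn Yn : ℕ → Ω → X) (hXm : ∀ n, Measurable (Xn n)) (hYm : ∀ n, Measurable (Yn n))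
    (hXlaw : ∀ n, Measure.map (Xn n) P = μ) (hYlaw : ∀ n, Measure.map (Yn n) P = ν)
    (hconv : Tendsto (fun n => ∫⁻ ω, ENNReal.ofReal (Ψ (Xn n ω, Yn n ω)) ∂P)
      atTop (nhds 0)) :
    μ = ν := by
  letI := TopologicalSpace.upgradeIsCompletelyMetrizable X
  apply ext_of_forall_lintegral_eq_of_IsFiniteMeasure
  intro f
  -- real-valued version of f
  set g : X → ℝ := fun x => (f x : ℝ) with hg
  have hgc : Continuous g := NNReal.continuous_coe.comp f.continuous
  have hgm : Measurable g := hgc.measurable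
  have hgnn : ∀ x, 0 ≤ g x := fun x => (f x).coe_nonneg
  set fR : BoundedContinuousFunction X ℝ := f.comp NNReal.toReal isometry_subtype_coe.lipschitz
    with hfR
  set M : ℝ := ‖fR‖ with hM
  have hMnn : 0 ≤ M := norm_nonneg fR
  have hgle : ∀ x, g x ≤ M := by
    intro x
    have h1 := fR.norm_coe_le_norm x
    rw [Real.norm_eq_abs] at h1
    exact le_trans (le_abs_self _) h1
  -- integrability
  have hint : ∀ (φ : Ω → X), Measurable φ → Integrable (fun ω => g (φ ω)) P := by
    intro φ hφ
    refine Integrable.mono' (integrable_const M) ((hgm.comp hφ).aestronglyMeasurable)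
      (Filter.Eventually.of_forall fun ω => ?_)
    rw [Real.norm_eq_abs, abs_of_nonneg (hgnn _)]
    exact hgle _
  have hgint_μ : Integrable g μ := by
    rw [← hXlaw 0]
    exact (integrable_map_measure hgc.aestronglyMeasurable (hXm 0).aemeasurable).2
      (hint _ (hXm 0))
  have hgint_ν : Integrable g ν := by
    rw [← hYlaw 0]
    exact (integrable_map_measure hgc.aestronglyMeasurable (hYm 0).aemeasurable).2
      (hint _ (hYm 0))
  -- reduce to real integrals
  rw [lintegral_coe_eq_integral f hgint_μ, lintegral_coe_eq_integral f hgint_ν]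
  congr 1
  -- show the difference of integrals is zero
  set d : ℝ := ∫ x, g x ∂μ - ∫ x, g x ∂ν with hd
  suffices hdz : d = 0 by linarith [hd ▸ hdz]
  have habs : ∀ ε : ℝ, 0 < ε → |d| ≤ ε * (1 + 6 * M) := by
    intro ε hε
    -- tightness: compact K with small complements
    obtain ⟨K₁, hK₁c, hK₁⟩ := tight_aux μ (ε := ENNReal.ofReal ε)
      ((ENNReal.ofReal_pos.2 hε).ne')
    obtain ⟨K₂, hK₂c, hK₂⟩ := tight_aux ν (ε := ENNReal.ofReal ε)
      ((ENNReal.ofReal_pos.2 hε).ne')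
    set K : Set X := K₁ ∪ K₂ with hK
    have hKc : IsCompact K := hK₁c.union hK₂c
    have hKμ : μ Kᶜ < ENNReal.ofReal ε :=
      lt_of_le_of_lt (measure_mono (Set.compl_subset_compl.2 Set.subset_union_left)) hK₁
    have hKν : ν Kᶜ < ENNReal.ofReal ε :=
      lt_of_le_of_lt (measure_mono (Set.compl_subset_compl.2 Set.subset_union_right)) hK₂
    -- the bad set S and the positive lower bound c for Ψ on it
    set S : Set (X × X) := (K ×ˢ K) ∩ {p | ε ≤ |g p.1 - g p.2|} with hS
    have hScompact : IsCompact S := by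
      apply (hKc.prod hKc).inter_right
      exact isClosed_le continuous_const
        ((hgc.comp continuous_fst).sub (hgc.comp continuous_snd)).abs
    obtain ⟨c, hcpos, hcle⟩ : ∃ c : ℝ, 0 < c ∧ ∀ p ∈ S, c ≤ Ψ p := by
      rcases S.eq_empty_or_nonempty with hSe | hSne
      · exact ⟨1, one_pos, fun p hp => by simp [hSe] at hp⟩
      · obtain ⟨p₀, hp₀S, hp₀min⟩ := hScompact.exists_isMinOn hSne hΨc.continuousOn
        refine ⟨Ψ p₀, ?_, fun p hp => hp₀min hp⟩
        have hne : p₀.1 ≠ p₀.2 := by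
          intro h
          have := hp₀S.2
          simp only [Set.mem_setOf_eq, h, sub_self, abs_zero] at this
          linarith
        have := hΨpos p₀.1 p₀.2 hne
        rwa [Prod.mk.eta] at this
    -- choose n with small expected Ψ
    have hcε : (0 : ℝ≥0∞) < ENNReal.ofReal c * ENNReal.ofReal ε := by
      exact ENNReal.mul_pos (ENNReal.ofReal_pos.2 hcpos).ne' (ENNReal.ofReal_pos.2 hε).ne'
    obtain ⟨n, hn⟩ := (hconv.eventually_lt_const hcε).exists
    -- pointwise bound
    set N : ℝ≥0∞ := ENNReal.ofReal (2 * M) with hN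
    set A₁ : Set Ω := Xn n ⁻¹' Kᶜ with hA₁
    set A₂ : Set Ω := Yn n ⁻¹' Kᶜ with hA₂
    set A₃ : Set Ω := {ω | c ≤ Ψ (Xn n ω, Yn n ω)} with hA₃
    have hA₁m : MeasurableSet A₁ := (hXm n) hKc.isClosed.measurableSet.compl
    have hA₂m : MeasurableSet A₂ := (hYm n) hKc.isClosed.measurableSet.compl
    have hA₃m : MeasurableSet A₃ := by
      have : Measurable fun ω => Ψ (Xn n ω, Yn n ω) :=
        hΨc.measurable.comp ((hXm n).prodMk (hYm n))
      exact measurableSet_le measurable_const this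
    set h : Ω → ℝ := fun ω => g (Xn n ω) - g (Yn n ω) with hh
    have hhm : Measurable h := (hgm.comp (hXm n)).sub (hgm.comp (hYm n))
    have hptwise : ∀ ω, ENNReal.ofReal |h ω| ≤
        ENNReal.ofReal ε + (A₁.indicator (fun _ => N) ω + A₂.indicator (fun _ => N) ω
          + A₃.indicator (fun _ => N) ω) := by
      intro ω
      have h2M : |h ω| ≤ 2 * M := by
        have h1 := hgnn (Xn n ω); have h2 := hgnn (Yn n ω)
        have h3 := hgle (Xn n ω); have h4 := hgle (Yn n ω)
        rw [abs_le]; constructor <;> simp only [hh] <;> nlinarith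
      by_cases hx : Xn n ω ∈ K
      · by_cases hy : Yn n ω ∈ K
        · by_cases hsmall : |h ω| ≤ ε
          · calc ENNReal.ofReal |h ω| ≤ ENNReal.ofReal ε := ENNReal.ofReal_le_ofReal hsmall
              _ ≤ _ := le_add_of_nonneg_right zero_le
          · -- then (Xn n ω, Yn n ω) ∈ S, so ω ∈ A₃
            have hmem : (Xn n ω, Yn n ω) ∈ S :=
              ⟨⟨hx, hy⟩, le_of_not_ge hsmall⟩
            have hωA₃ : ω ∈ A₃ := hcle _ hmem
            calc ENNReal.ofReal |h ω| ≤ N := ENNReal.ofReal_le_ofReal h2M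
              _ = A₃.indicator (fun _ => N) ω := by rw [Set.indicator_of_mem hωA₃]
              _ ≤ _ := le_add_self.trans le_add_self
        · have hωA₂ : ω ∈ A₂ := hy
          calc ENNReal.ofReal |h ω| ≤ N := ENNReal.ofReal_le_ofReal h2M
            _ = A₂.indicator (fun _ => N) ω := by rw [Set.indicator_of_mem hωA₂]
            _ ≤ _ := (le_add_self.trans le_self_add).trans le_add_self
      · have hωA₁ : ω ∈ A₁ := hx
        calc ENNReal.ofReal |h ω| ≤ N := ENNReal.ofReal_le_ofReal h2M
          _ = A₁.indicator (fun _ => N) ω := by rw [Set.indicator_of_mem hωA₁]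
          _ ≤ _ := (le_self_add.trans le_self_add).trans le_add_self
    -- measure bounds
    have hPA₁ : P A₁ < ENNReal.ofReal ε := by
      have : μ Kᶜ = P A₁ := by
        rw [← hXlaw n, Measure.map_apply (hXm n) hKc.isClosed.measurableSet.compl]
      rwa [this] at hKμ
    have hPA₂ : P A₂ < ENNReal.ofReal ε := by
      have : ν Kᶜ = P A₂ := by
        rw [← hYlaw n, Measure.map_apply (hYm n) hKc.isClosed.measurableSet.compl]
      rwa [this] at hKν
    have hPA₃ : P A₃ ≤ ENNReal.ofReal ε := by
      have hsub : A₃ ⊆ {ω | ENNReal.ofReal c ≤ ENNReal.ofReal (Ψ (Xn n ω, Yn n ω))} :=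
        fun ω hω => ENNReal.ofReal_le_ofReal hω
      have hmark := meas_ge_le_lintegral_div
        (μ := P) (f := fun ω => ENNReal.ofReal (Ψ (Xn n ω, Yn n ω)))
        ((hΨc.measurable.comp ((hXm n).prodMk (hYm n))).ennreal_ofReal.aemeasurable)
        (ε := ENNReal.ofReal c) ((ENNReal.ofReal_pos.2 hcpos).ne')
        ENNReal.ofReal_ne_top
      calc P A₃ ≤ P {ω | ENNReal.ofReal c ≤ ENNReal.ofReal (Ψ (Xn n ω, Yn n ω))} :=
            measure_mono hsub
        _ ≤ (∫⁻ ω, ENNReal.ofReal (Ψ (Xn n ω, Yn n ω)) ∂P) / ENNReal.ofReal c := hmark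
        _ ≤ (ENNReal.ofReal c * ENNReal.ofReal ε) / ENNReal.ofReal c := by
            exact ENNReal.div_le_div_right hn.le _
        _ = ENNReal.ofReal ε := by
            rw [mul_comm, mul_div_assoc,
              ENNReal.div_self ((ENNReal.ofReal_pos.2 hcpos).ne')
                ENNReal.ofReal_ne_top, mul_one]
    -- lintegral bound
    have hlint : (∫⁻ ω, ENNReal.ofReal |h ω| ∂P) ≤
        ENNReal.ofReal ε + N * (ENNReal.ofReal ε + ENNReal.ofReal ε + ENNReal.ofReal ε) := by
      calc (∫⁻ ω, ENNReal.ofReal |h ω| ∂P)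
          ≤ ∫⁻ ω, ENNReal.ofReal ε + (A₁.indicator (fun _ => N) ω
              + A₂.indicator (fun _ => N) ω + A₃.indicator (fun _ => N) ω) ∂P :=
            lintegral_mono hptwise
        _ = ENNReal.ofReal ε + (N * P A₁ + N * P A₂ + N * P A₃) := by
            rw [lintegral_add_left (by exact measurable_const)]
            rw [lintegral_add_right _ (measurable_const.indicator hA₃m)]
            rw [lintegral_add_right _ (measurable_const.indicator hA₂m)]
            rw [lintegral_indicator_const hA₁m, lintegral_indicator_const hA₂m,
              lintegral_indicator_const hA₃m, lintegral_const, measure_univ, mul_one]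
        _ ≤ ENNReal.ofReal ε + (N * ENNReal.ofReal ε + N * ENNReal.ofReal ε
              + N * ENNReal.ofReal ε) := by
            exact add_le_add_right (add_le_add (add_le_add (mul_le_mul_right hPA₁.le N)
              (mul_le_mul_right hPA₂.le N)) (mul_le_mul_right hPA₃ N)) _
        _ = ENNReal.ofReal ε + N * (ENNReal.ofReal ε + ENNReal.ofReal ε + ENNReal.ofReal ε) := by
            ring
    -- identify d
    have hd_eq : d = ∫ ω, h ω ∂P := by
      have h1 : ∫ x, g x ∂μ = ∫ ω, g (Xn n ω) ∂P := by
        rw [← hXlaw n, integral_map (hXm n).aemeasurable hgc.aestronglyMeasurable]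
      have h2 : ∫ x, g x ∂ν = ∫ ω, g (Yn n ω) ∂P := by
        rw [← hYlaw n, integral_map (hYm n).aemeasurable hgc.aestronglyMeasurable]
      rw [hd, h1, h2, ← integral_sub (hint _ (hXm n)) (hint _ (hYm n))]
    -- finish
    have hbound_ne_top : ENNReal.ofReal ε
        + N * (ENNReal.ofReal ε + ENNReal.ofReal ε + ENNReal.ofReal ε) ≠ ⊤ := by
      apply ENNReal.add_ne_top.2
      constructor
      · exact ENNReal.ofReal_ne_top
      · exact ENNReal.mul_ne_top ENNReal.ofReal_ne_top
          (by simp [ENNReal.add_ne_top, ENNReal.ofReal_ne_top])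
    have step1 : |d| ≤ ∫ ω, |h ω| ∂P := by
      rw [hd_eq]
      simpa [Real.norm_eq_abs] using norm_integral_le_integral_norm h (μ := P)
    have step2 : ∫ ω, |h ω| ∂P = (∫⁻ ω, ENNReal.ofReal |h ω| ∂P).toReal := by
      rw [integral_eq_lintegral_of_nonneg_ae (Filter.Eventually.of_forall fun ω => abs_nonneg _)
        hhm.abs.aestronglyMeasurable]
    have step3 : (∫⁻ ω, ENNReal.ofReal |h ω| ∂P).toReal ≤
        (ENNReal.ofReal ε + N * (ENNReal.ofReal ε + ENNReal.ofReal ε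
          + ENNReal.ofReal ε)).toReal :=
      ENNReal.toReal_mono hbound_ne_top hlint
    have step4 : (ENNReal.ofReal ε + N * (ENNReal.ofReal ε + ENNReal.ofReal ε
        + ENNReal.ofReal ε)).toReal = ε + 2 * M * (ε + ε + ε) := by
      rw [hN]
      rw [ENNReal.toReal_add ENNReal.ofReal_ne_top
        (ENNReal.mul_ne_top ENNReal.ofReal_ne_top
          (ENNReal.add_ne_top.2 ⟨ENNReal.add_ne_top.2
            ⟨ENNReal.ofReal_ne_top, ENNReal.ofReal_ne_top⟩, ENNReal.ofReal_ne_top⟩)),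
        ENNReal.toReal_mul,
        ENNReal.toReal_add (ENNReal.add_ne_top.2
          ⟨ENNReal.ofReal_ne_top, ENNReal.ofReal_ne_top⟩) ENNReal.ofReal_ne_top,
        ENNReal.toReal_add ENNReal.ofReal_ne_top ENNReal.ofReal_ne_top,
        ENNReal.toReal_ofReal hε.le,
        ENNReal.toReal_ofReal (by positivity : (0:ℝ) ≤ 2 * M)]
    calc |d| ≤ (ENNReal.ofReal ε + N * (ENNReal.ofReal ε + ENNReal.ofReal ε
          + ENNReal.ofReal ε)).toReal := by
          rw [← step4] at *
          exact step1.trans (step2 ▸ step3)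
      _ = ε + 2 * M * (ε + ε + ε) := step4
      _ = ε * (1 + 6 * M) := by ring
  -- conclude |d| ≤ 0
  have hC : (0 : ℝ) < 1 + 6 * M := by
    have : 0 ≤ M := hMnn
    linarith
  have : |d| ≤ 0 := by
    by_contra hcon
    push_neg at hcon
    have hε := habs (|d| / (2 * (1 + 6 * M))) (by positivity)
    have : |d| / (2 * (1 + 6 * M)) * (1 + 6 * M) = |d| / 2 := by
      field_simp
    rw [this] at hε
    linarith
  exact abs_eq_zero.1 (le_antisymm this (abs_nonneg d))
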